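/- Let f ∈ L¹([0,1]^n), x ∈ [0,1]^n, and let {f_m} be a sequence of integrable functions such that: (a) L := lim_m f_m(x) exists; (b) for every ε > 0 there is i and R such that for all r > R and all t ∈ {−1/3,0,1/3}^n, |f_i(x) − L| < ε/2, f_i is constant on the translated cube I_r^t(x), and (1/μ(I_r^t(x))) ∫_{I_r^t(x)} |f − f_i| dμ < ε/2. Then for every t ∈ {−1/3,0,1/3}^n, lim_{r→∞} (1/μ(I_r^t(x))) ∫_{I_r^t(x)} f dμ = L. -/

import Mathlib

open MeasureTheory

/-- The translation set `{-1/3, 0, 1/3}`. -/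
def tSet : Set ℝ := {-(1 / 3), 0, 1 / 3}

/-- The translate by `t` of the open dyadic cube of precision `r` containing `x`
(when `x` avoids the translated grid). -/
noncomputable def irt (n r : ℕ) (t x : Fin n → ℝ) : Set (Fin n → ℝ) :=
  Set.univ.pi fun i =>
    Set.Ioo ((⌊(x i - t i) * 2 ^ r⌋ : ℝ) / 2 ^ r + t i)
      (((⌊(x i - t i) * 2 ^ r⌋ : ℝ) + 1) / 2 ^ r + t i)

lemma vol_irt (n r : ℕ) (t x : Fin n → ℝ) :
    volume (irt n r t x) = ENNReal.ofReal ((1 / 2 ^ r : ℝ) ^ n) := by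
  rw [irt, volume_pi_pi]
  have : ∀ i : Fin n, volume (Set.Ioo ((⌊(x i - t i) * 2 ^ r⌋ : ℝ) / 2 ^ r + t i)
      (((⌊(x i - t i) * 2 ^ r⌋ : ℝ) + 1) / 2 ^ r + t i)) = ENNReal.ofReal ((1 / 2 ^ r : ℝ)) := by
    intro i
    rw [Real.volume_Ioo]
    ring_nf
  simp only [this, Finset.prod_const, Finset.card_univ, Fintype.card_fin]
  rw [← ENNReal.ofReal_pow (by positivity)]

lemma meas_irt (n r : ℕ) (t x : Fin n → ℝ) : MeasurableSet (irt n r t x) :=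
  MeasurableSet.univ_pi fun _ => measurableSet_Ioo

/-- if `L = lim_m f_m(x)` exists and for every `ε > 0` there are `i`
and `R` such that for all `r > R` and all `t ∈ {-1/3,0,1/3}^n`, `|f_i(x) − L| < ε/2`,
`f_i` is constant on `I_r^t(x)`, and the average of `|f − f_i|` over `I_r^t(x)` is
`< ε/2`, then for every `t ∈ {-1/3,0,1/3}^n` the averages of `f` over `I_r^t(x)`
converge to `L`. -/
theorem stmt10 (n : ℕ) (f : (Fin n → ℝ) → ℝ) (fm : ℕ → (Fin n → ℝ) → ℝ)
    (x : Fin n → ℝ) (L : ℝ)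
    (hx : ∀ (r : ℕ) (t : Fin n → ℝ), (∀ i, t i ∈ tSet) → x ∈ irt n r t x)
    (hf : ∀ (r : ℕ) (t : Fin n → ℝ), IntegrableOn f (irt n r t x))
    (hfm : ∀ (m r : ℕ) (t : Fin n → ℝ), IntegrableOn (fm m) (irt n r t x))
    (ha : Filter.Tendsto (fun m => fm m x) Filter.atTop (nhds L))
    (hb : ∀ ε > (0 : ℝ), ∃ i R : ℕ, ∀ r > R, ∀ t : Fin n → ℝ, (∀ i', t i' ∈ tSet) →
      |fm i x - L| < ε / 2 ∧
      (∀ y ∈ irt n r t x, fm i y = fm i x) ∧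
      (∫ y in irt n r t x, |f y - fm i y|) / (volume (irt n r t x)).toReal < ε / 2) :
    ∀ t : Fin n → ℝ, (∀ i, t i ∈ tSet) →
      Filter.Tendsto
        (fun r : ℕ => (∫ y in irt n r t x, f y) / (volume (irt n r t x)).toReal)
        Filter.atTop (nhds L) := by
  intro t ht
  rw [Metric.tendsto_atTop]
  intro ε hε
  obtain ⟨i, R, hIR⟩ := hb ε hε
  refine ⟨R + 1, fun r hr => ?_⟩
  obtain ⟨h1, h2, h3⟩ := hIR r (lt_of_lt_of_le (Nat.lt_succ_self R) hr) t ht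
  set s := irt n r t x with hs
  set V := (volume s).toReal with hV
  have hVpos : 0 < V := by
    rw [hV, hs, vol_irt, ENNReal.toReal_ofReal (by positivity)]
    positivity
  have hconst : ∫ y in s, fm i y = V * fm i x := by
    rw [setIntegral_congr_fun (meas_irt n r t x) h2, setIntegral_const, smul_eq_mul]
    rfl
  have hdiff : (∫ y in s, f y) - ∫ y in s, fm i y = ∫ y in s, (f y - fm i y) := by
    exact (integral_sub (hf r t) (hfm i r t)).symm
  have habs : |∫ y in s, (f y - fm i y)| ≤ ∫ y in s, |f y - fm i y| := by
    simpa [Real.norm_eq_abs] using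
      norm_integral_le_integral_norm (μ := volume.restrict s) (fun y => f y - fm i y)
  rw [Real.dist_eq]
  have key : (∫ y in s, f y) / V - L = (∫ y in s, (f y - fm i y)) / V + (fm i x - L) := by
    have h4 : (∫ y in s, (f y - fm i y)) = (∫ y in s, f y) - V * fm i x := by
      rw [← hdiff, hconst]
    rw [h4]
    field_simp
    ring
  rw [key]
  calc |(∫ y in s, (f y - fm i y)) / V + (fm i x - L)|
      ≤ |(∫ y in s, (f y - fm i y)) / V| + |fm i x - L| := abs_add_le _ _
    _ ≤ (∫ y in s, |f y - fm i y|) / V + |fm i x - L| := by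
        gcongr ?_ + _
        rw [abs_div, abs_of_pos hVpos]
        gcongr
    _ < ε / 2 + ε / 2 := add_lt_add h3 h1
    _ = ε := by ring
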